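/- arXiv:2410.09795 — 2 statements merged into one kernel-verified Lean document; each statement's English description precedes it below -/
import Mathlib

section
/- Let N, D be positive integers, let A ∈ ℝ^{D×D} be a matrix, let R = (r_{ij}) ∈ ℝ^{N×N}, fix an index i, and let μ_1,…,μ_N be finite compactly supported Borel measures on ℝ^D. Then the function F : ℝ^D → ℝ defined by F(x) = Σ_{j=1}^N ∫ exp(⟨x, A x′⟩ + r_{ij}) dμ_j(x′) is differentiable on all of ℝ^D, with gradient ∇F(x) = Σ_{j=1}^N ∫ exp(⟨x, A x′⟩ + r_{ij}) A x′ dμ_j(x′). Consequently the attention operator T⁰_{μ_i}(x) = −Σ_{j=1}^N ∫ exp(⟨x, A x′⟩ + r_{ij}) A x′ dμ_j(x′) equals −∇F(x), the negative spatial gradient of the first variation of the energy E of Proposition 2. -/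
open scoped RealInnerProductSpace BigOperators
open MeasureTheory
set_option synthInstance.maxHeartbeats 1000000
set_option maxHeartbeats 1000000

private lemma aux_fderiv {E : Type*} [NormedAddCommGroup E] [InnerProductSpace ℝ E]
    [CompleteSpace E] [MeasurableSpace E] [OpensMeasurableSpace E]
    [SecondCountableTopology E]
    (A : E →L[ℝ] E) (c : ℝ) (μ : Measure E) [IsFiniteMeasure μ]
    {K : Set E} (hK : IsCompact K) (hμK : μ Kᶜ = 0) (x : E) :
    HasFDerivAt (fun y => ∫ x', Real.exp (⟪y, A x'⟫ + c) ∂μ)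
      (innerSL ℝ (∫ x', Real.exp (⟪x, A x'⟫ + c) • A x' ∂μ)) x := by
  obtain ⟨M, hM⟩ := hK.isBounded.exists_norm_le
  set M₀ : ℝ := max M 0 with hM₀
  have hMK : ∀ y ∈ K, ‖y‖ ≤ M₀ := fun y hy => (hM y hy).trans (le_max_left _ _)
  have haeK : ∀ᵐ x' ∂μ, x' ∈ K := by
    rw [ae_iff]
    simpa [Set.compl_def] using hμK
  set C : ℝ := Real.exp ((‖x‖ + 1) * (‖A‖ * M₀) + c) with hC
  set B : ℝ := C * (‖A‖ * M₀) with hB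
  have hM₀0 : (0:ℝ) ≤ M₀ := le_max_right _ _
  have hAM : (0:ℝ) ≤ ‖A‖ * M₀ := mul_nonneg (norm_nonneg _) hM₀0
  -- key exponential bound
  have hexp : ∀ y : E, ‖y‖ ≤ ‖x‖ + 1 → ∀ x' ∈ K, Real.exp (⟪y, A x'⟫ + c) ≤ C := by
    intro y hy x' hx'
    apply Real.exp_le_exp.2
    gcongr
    calc ⟪y, A x'⟫ ≤ ‖y‖ * ‖A x'‖ := real_inner_le_norm _ _
      _ ≤ (‖x‖ + 1) * (‖A‖ * M₀) := by
          apply mul_le_mul hy _ (norm_nonneg _) (by positivity)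
          calc ‖A x'‖ ≤ ‖A‖ * ‖x'‖ := A.le_opNorm _
            _ ≤ ‖A‖ * M₀ := by
                exact mul_le_mul_of_nonneg_left (hMK x' hx') (norm_nonneg _)
  -- pointwise derivative
  have hd : ∀ (v : E) (y : E), HasFDerivAt (fun y : E => Real.exp (⟪y, v⟫ + c))
      (Real.exp (⟪y, v⟫ + c) • (innerSL ℝ v)) y := by
    intro v y
    have h1 : HasFDerivAt (fun y : E => ⟪y, v⟫ + c) (innerSL ℝ v) y := by
      have := ((innerSL ℝ v).hasFDerivAt (x := y)).add_const c
      simpa [real_inner_comm] using this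
    exact (Real.hasDerivAt_exp _).comp_hasFDerivAt y h1
  -- measurability and integrability facts
  have hcont : ∀ y : E, Continuous fun x' => Real.exp (⟪y, A x'⟫ + c) := by
    intro y
    exact Real.continuous_exp.comp (((continuous_const.inner A.continuous)).add continuous_const)
  have hF_meas : ∀ᶠ y in nhds x, AEStronglyMeasurable
      (fun x' => Real.exp (⟪y, A x'⟫ + c)) μ :=
    Filter.Eventually.of_forall fun y => (hcont y).aestronglyMeasurable
  have hF_int : Integrable (fun x' => Real.exp (⟪x, A x'⟫ + c)) μ := by
    apply Integrable.mono' (integrable_const C) (hcont x).aestronglyMeasurable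
    filter_upwards [haeK] with x' hx'
    rw [Real.norm_eq_abs, abs_of_pos (Real.exp_pos _)]
    exact hexp x (by linarith [norm_nonneg x]) x' hx'
  have hF'_meas : AEStronglyMeasurable
      (fun x' => Real.exp (⟪x, A x'⟫ + c) • (innerSL ℝ (A x'))) μ := by
    apply Continuous.aestronglyMeasurable
    exact (hcont x).smul ((innerSL ℝ).continuous.comp A.continuous)
  have h_bound : ∀ᵐ x' ∂μ, ∀ y ∈ Metric.ball x 1,
      ‖Real.exp (⟪y, A x'⟫ + c) • (innerSL ℝ (A x'))‖ ≤ B := by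
    filter_upwards [haeK] with x' hx' y hy
    have hny : ‖y‖ ≤ ‖x‖ + 1 := by
      have := mem_ball_iff_norm.1 hy
      calc ‖y‖ = ‖y - x + x‖ := by rw [sub_add_cancel]
        _ ≤ ‖y - x‖ + ‖x‖ := norm_add_le _ _
        _ ≤ ‖x‖ + 1 := by linarith
    rw [norm_smul _ ((innerSL ℝ) (A x')), Real.norm_eq_abs, abs_of_pos (Real.exp_pos _), innerSL_apply_norm]
    apply mul_le_mul (hexp y hny x' hx') _ (norm_nonneg _) (Real.exp_pos _).le
    calc ‖A x'‖ ≤ ‖A‖ * ‖x'‖ := A.le_opNorm _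
      _ ≤ ‖A‖ * M₀ := mul_le_mul_of_nonneg_left (hMK x' hx') (norm_nonneg _)
  have h_diff : ∀ᵐ x' ∂μ, ∀ y ∈ Metric.ball x 1,
      HasFDerivAt (fun y => Real.exp (⟪y, A x'⟫ + c))
        (Real.exp (⟪y, A x'⟫ + c) • (innerSL ℝ (A x'))) y :=
    Filter.Eventually.of_forall fun x' y _ => hd (A x') y
  have main := hasFDerivAt_integral_of_dominated_of_fderiv_le (Metric.ball_mem_nhds x one_pos)
    hF_meas hF_int hF'_meas h_bound (integrable_const B) h_diff
  -- rewrite the derivative integral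
  have hint2 : Integrable (fun x' => Real.exp (⟪x, A x'⟫ + c) • A x') μ := by
    apply Integrable.mono' (integrable_const B)
    · exact ((hcont x).smul A.continuous).aestronglyMeasurable
    · filter_upwards [haeK] with x' hx'
      rw [norm_smul, Real.norm_eq_abs, abs_of_pos (Real.exp_pos _)]
      apply mul_le_mul (hexp x (by linarith [norm_nonneg x]) x' hx') _
        (norm_nonneg _) (Real.exp_pos _).le
      calc ‖A x'‖ ≤ ‖A‖ * ‖x'‖ := A.le_opNorm _
        _ ≤ ‖A‖ * M₀ := mul_le_mul_of_nonneg_left (hMK x' hx') (norm_nonneg _)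
  have heq : (∫ x', Real.exp (⟪x, A x'⟫ + c) • (innerSL ℝ (A x')) ∂μ)
      = innerSL ℝ (∫ x', Real.exp (⟪x, A x'⟫ + c) • A x' ∂μ) := by
    rw [← ContinuousLinearMap.integral_comp_comm (innerSL ℝ) hint2]
    congr 1
    funext x'
    ext w
    simp [real_inner_smul_left, innerSL_apply_apply (𝕜 := ℝ)]
  rwa [heq] at main

/-- For a matrix `A` (modeled as a continuous linear operator on `ℝ^D`),
`R ∈ ℝ^{N×N}`, a fixed index `i`, and finite compactly supported Borel measures
`μ₁,…,μ_N` on `ℝ^D`, the first-variation function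
`F(x) = ∑_j ∫ exp(⟨x, A x'⟩ + r_{ij}) dμ_j(x')` is differentiable everywhere, with gradient
`∇F(x) = ∑_j ∫ exp(⟨x, A x'⟩ + r_{ij}) A x' dμ_j(x')`; hence the attention operator
`T⁰_{μ_i}(x) = -∑_j ∫ exp(⟨x, A x'⟩ + r_{ij}) A x' dμ_j(x')` equals `-∇F(x)`. -/
theorem stmt3 (N D : ℕ) (hN : 0 < N) (hD : 0 < D)
    (A : EuclideanSpace ℝ (Fin D) →L[ℝ] EuclideanSpace ℝ (Fin D))
    (R : Fin N → Fin N → ℝ) (i : Fin N)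
    (μ : Fin N → Measure (EuclideanSpace ℝ (Fin D)))
    [∀ j, IsFiniteMeasure (μ j)]
    (hμc : ∀ j, ∃ K : Set (EuclideanSpace ℝ (Fin D)), IsCompact K ∧ μ j Kᶜ = 0)
    (x : EuclideanSpace ℝ (Fin D)) :
    HasGradientAt
      (fun y : EuclideanSpace ℝ (Fin D) =>
        ∑ j : Fin N, ∫ x', Real.exp (⟪y, A x'⟫ + R i j) ∂(μ j))
      (∑ j : Fin N, ∫ x', Real.exp (⟪x, A x'⟫ + R i j) • A x' ∂(μ j)) x := by
  rw [hasGradientAt_iff_hasFDerivAt]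
  have htd : (InnerProductSpace.toDual ℝ (EuclideanSpace ℝ (Fin D)))
      (∑ j : Fin N, ∫ x', Real.exp (⟪x, A x'⟫ + R i j) • A x' ∂(μ j))
      = ∑ j : Fin N, innerSL ℝ (∫ x', Real.exp (⟪x, A x'⟫ + R i j) • A x' ∂(μ j)) := by
    ext w
    simp [InnerProductSpace.toDual_apply_apply, sum_inner]
  rw [htd]
  apply HasFDerivAt.fun_sum
  intro j _
  obtain ⟨K, hK, hμK⟩ := hμc j
  exact aux_fderiv A (R i j) (μ j) hK hμK x
end

section
/- Let X ∈ ℝ^{N×D} with rows x_1,…,x_N ∈ ℝ^D, let W ∈ ℝ^{D×D}, set A = W Wᵀ, and let R = (r_{ij}) ∈ ℝ^{N×N}. Define the latent distance matrix D_X ∈ ℝ^{N×N} by (D_X)_{ij} = (1/2)‖Wᵀ x_i − Wᵀ x_j‖₂² − r_{ij}. Then for every doubly stochastic matrix P ∈ ℝ^{N×N}: ⟨D_X, P⟩_F + ⟨X A Xᵀ + R, P⟩_F = Σ_{i=1}^N ‖Wᵀ x_i‖₂²; that is, the sum of the two transport costs is a constant independent of P. -/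
open scoped BigOperators
open Matrix

/-- The Frobenius inner product of two real matrices: `⟨U, V⟩_F = ∑_{i,j} U_{ij} V_{ij}`. -/
def frobInner {m n : Type*} [Fintype m] [Fintype n]
    (U V : Matrix m n ℝ) : ℝ :=
  ∑ i, ∑ j, U i j * V i j

/-- With `A = W Wᵀ` and the latent distance matrix
`(D_X)_{ij} = (1/2)‖Wᵀ x_i − Wᵀ x_j‖₂² − r_{ij}`, for every doubly stochastic `P`:
`⟨D_X, P⟩_F + ⟨X A Xᵀ + R, P⟩_F = ∑_i ‖Wᵀ x_i‖₂²`, a constant independent of `P`. -/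
theorem stmt5 (N D : ℕ)
    (X : Matrix (Fin N) (Fin D) ℝ)
    (W : Matrix (Fin D) (Fin D) ℝ)
    (A : Matrix (Fin D) (Fin D) ℝ) (hA : A = W * Wᵀ)
    (R : Matrix (Fin N) (Fin N) ℝ)
    (DX : Matrix (Fin N) (Fin N) ℝ)
    (hDX : ∀ i j, DX i j =
      (1 / 2 : ℝ) * ∑ d : Fin D, (Wᵀ.mulVec (X i) d - Wᵀ.mulVec (X j) d) ^ 2 - R i j)
    (P : Matrix (Fin N) (Fin N) ℝ)
    (hP0 : ∀ i j, 0 ≤ P i j)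
    (hProw : ∀ i, ∑ j, P i j = 1)
    (hPcol : ∀ j, ∑ i, P i j = 1) :
    frobInner DX P + frobInner (X * A * Xᵀ + R) P
      = ∑ i : Fin N, ∑ d : Fin D, (Wᵀ.mulVec (X i) d) ^ 2 := by
  set y : Fin N → Fin D → ℝ := fun i d => Wᵀ.mulVec (X i) d with hy
  have hXW : ∀ i d, y i d = (X * W) i d := by
    intro i d
    simp [hy, Matrix.mulVec, Matrix.mul_apply, Matrix.transpose_apply, dotProduct, mul_comm]
  have hXAX : ∀ i j, (X * A * Xᵀ) i j = ∑ d, y i d * y j d := by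
    intro i j
    have : X * A * Xᵀ = (X * W) * (X * W)ᵀ := by
      rw [hA, Matrix.transpose_mul]
      simp [Matrix.mul_assoc]
    rw [this, Matrix.mul_apply]
    simp [Matrix.transpose_apply, hXW]
  set c : Fin N → ℝ := fun i => (1 / 2 : ℝ) * ∑ d, y i d ^ 2 with hc
  have key : ∀ i j, DX i j + (X * A * Xᵀ + R) i j = c i + c j := by
    intro i j
    rw [Matrix.add_apply, hDX, hXAX, hc]
    have hsq : ∑ d, (y i d - y j d) ^ 2
        = ∑ d, y i d ^ 2 - 2 * ∑ d, y i d * y j d + ∑ d, y j d ^ 2 := by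
      rw [Finset.mul_sum, ← Finset.sum_sub_distrib, ← Finset.sum_add_distrib]
      congr 1; ext d; ring
    rw [hsq]; ring
  have hsum : frobInner DX P + frobInner (X * A * Xᵀ + R) P
      = ∑ i, ∑ j, (DX i j + (X * A * Xᵀ + R) i j) * P i j := by
    simp [frobInner, ← Finset.sum_add_distrib, add_mul]
  rw [hsum]
  have : ∑ i, ∑ j, (DX i j + (X * A * Xᵀ + R) i j) * P i j
      = (∑ i, ∑ j, c i * P i j) + (∑ i, ∑ j, c j * P i j) := by
    rw [← Finset.sum_add_distrib]
    congr 1; ext i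
    rw [← Finset.sum_add_distrib]
    congr 1; ext j
    rw [key]; ring
  rw [this]
  have h1 : ∑ i, ∑ j, c i * P i j = ∑ i : Fin N, c i := by
    congr 1; ext i
    rw [← Finset.mul_sum, hProw, mul_one]
  have h2 : ∑ i, ∑ j, c j * P i j = ∑ i : Fin N, c i := by
    rw [Finset.sum_comm]
    congr 1; ext j
    rw [← Finset.mul_sum, hPcol, mul_one]
  rw [h1, h2, hc, ← Finset.sum_add_distrib]
  congr 1; ext i; ring
end
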